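/- Let C be a Minkowski-centered full-dimensional convex body in R^n. Then C_MAX ⊂ C^sup ⊂ C^out, where C^sup = ∩_{x∈C} (x + D_MAX(C,C)·C_MAX) is the supercompletion and C^out = ∩_{a ∈ bd(C°)∩bd(−C°)} {x : a·x ≤ 1} is the outer symmetric support. -/

import Mathlib

open Pointwise Set

variable {V : Type*} [NormedAddCommGroup V] [NormedSpace ℝ V]

/-- Circumradius `R(K,C) = inf {ρ ≥ 0 : ∃ t, K ⊆ t + ρC}`. -/
noncomputable def circumradius (K C : Set V) : ℝ :=
  sInf {ρ : ℝ | 0 ≤ ρ ∧ ∃ t : V, K ⊆ t +ᵥ ρ • C}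

/-- Inradius `r(K,C) = sup {ρ ≥ 0 : ∃ t, t + ρC ⊆ K}`. -/
noncomputable def inradius (K C : Set V) : ℝ :=
  sSup {ρ : ℝ | 0 ≤ ρ ∧ ∃ t : V, t +ᵥ ρ • C ⊆ K}

/-- Optimal containment: `K ⊆ C` and `R(K,C) = 1`. -/
def OptCont (K C : Set V) : Prop := K ⊆ C ∧ circumradius K C = 1

/-- Minkowski asymmetry `s(C) = R(C, -C)`. -/
noncomputable def minkAsym (C : Set V) : ℝ := circumradius C (-C)

/-- `C` is Minkowski-centered if `C ⊆opt s(C) • (-C)`. -/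
def MinkowskiCentered (C : Set V) : Prop := OptCont C (minkAsym C • (-C))

/-- Arithmetic symmetrization `(K - K)/2`. -/
def symAM (K : Set V) : Set V := (2 : ℝ)⁻¹ • (K - K)

/-- Maximum symmetrization `conv (C ∪ -C)`. -/
def symMAX (C : Set V) : Set V := convexHull ℝ (C ∪ -C)

/-- Minimum symmetrization `C ∩ -C`. -/
def symMIN (C : Set V) : Set V := C ∩ -C

/-- The maximum diameter `D_MAX(K,C) = 2 R((K-K)/2, conv(C ∪ -C))`. -/
noncomputable def DMAX (K C : Set V) : ℝ := 2 * circumradius (symAM K) (symMAX C)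

/-- The minimum diameter `D_MIN(K,C) = 2 R((K-K)/2, C ∩ -C)`. -/
noncomputable def DMIN (K C : Set V) : ℝ := 2 * circumradius (symAM K) (symMIN C)

/-- A body is complete (w.r.t. a diameter functional `D`) if every strictly larger
convex body has strictly larger diameter. -/
def IsCompleteBody (D : Set V → ℝ) (K : Set V) : Prop :=
  ∀ K' : Set V, Convex ℝ K' → IsCompact K' → K ⊂ K' → D K < D K'

/-- `Kstar` is a completion of `K` w.r.t. the diameter functional `D`. -/
def IsCompletion (D : Set V → ℝ) (K Kstar : Set V) : Prop :=
  K ⊆ Kstar ∧ Convex ℝ Kstar ∧ IsCompact Kstar ∧ IsCompleteBody D Kstar ∧ D Kstar = D K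

/-- Polar set `C° = {a : ∀ x ∈ C, ⟪a,x⟫ ≤ 1}`. -/
def polarSet {n : ℕ} (C : Set (EuclideanSpace ℝ (Fin n))) : Set (EuclideanSpace ℝ (Fin n)) :=
  {a | ∀ x ∈ C, (inner ℝ a x : ℝ) ≤ 1}

/-- Harmonic symmetrization `C_HM = ((C° - C°)/2)°`. -/
def symHM {n : ℕ} (C : Set (EuclideanSpace ℝ (Fin n))) : Set (EuclideanSpace ℝ (Fin n)) :=
  polarSet ((2 : ℝ)⁻¹ • (polarSet C - polarSet C))

/-- The harmonic diameter `D_HM(K,C) = 2 R((K-K)/2, C_HM)`. -/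
noncomputable def DHM {n : ℕ} (K C : Set (EuclideanSpace ℝ (Fin n))) : ℝ :=
  2 * circumradius (symAM K) (symHM C)

/-- Support function `h_C(s) = sup_{x ∈ C} ⟪s, x⟫`. -/
noncomputable def supportFn {n : ℕ} (C : Set (EuclideanSpace ℝ (Fin n)))
    (s : EuclideanSpace ℝ (Fin n)) : ℝ :=
  sSup ((fun x => (inner ℝ s x : ℝ)) '' C)

section AuxProofs

variable {n : ℕ}

private lemma aux_bddAbove {C : Set (EuclideanSpace ℝ (Fin n))} (hC : IsCompact C)
    (u : EuclideanSpace ℝ (Fin n)) : BddAbove ((fun x => (inner ℝ u x : ℝ)) '' C) :=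
  (hC.image (continuous_const.inner continuous_id)).bddAbove

private lemma inner_le_supportFn {C : Set (EuclideanSpace ℝ (Fin n))} (hC : IsCompact C)
    {x u : EuclideanSpace ℝ (Fin n)} (hx : x ∈ C) : (inner ℝ u x : ℝ) ≤ supportFn C u :=
  le_csSup (aux_bddAbove hC u) ⟨x, hx, rfl⟩

private lemma supportFn_le {C : Set (EuclideanSpace ℝ (Fin n))} (hne : C.Nonempty)
    {u : EuclideanSpace ℝ (Fin n)} {r : ℝ}
    (h : ∀ x ∈ C, (inner ℝ u x : ℝ) ≤ r) : supportFn C u ≤ r :=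
  csSup_le (hne.image _) (by rintro y ⟨x, hx, rfl⟩; exact h x hx)

private lemma exists_supportFn_eq {C : Set (EuclideanSpace ℝ (Fin n))} (hC : IsCompact C)
    (hne : C.Nonempty) (u : EuclideanSpace ℝ (Fin n)) :
    ∃ x ∈ C, (inner ℝ u x : ℝ) = supportFn C u := by
  obtain ⟨x, hx, hmax⟩ :=
    hC.exists_isMaxOn hne
      ((continuous_const.inner continuous_id :
        Continuous fun x : EuclideanSpace ℝ (Fin n) => (inner ℝ u x : ℝ)).continuousOn)
  exact ⟨x, hx, le_antisymm (inner_le_supportFn hC hx) (supportFn_le hne fun y hy => hmax hy)⟩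

private lemma supportFn_sub_le {C : Set (EuclideanSpace ℝ (Fin n))} (hC : IsCompact C)
    (hne : C.Nonempty) {R : ℝ} (hR : ∀ x ∈ C, ‖x‖ ≤ R)
    (u v : EuclideanSpace ℝ (Fin n)) :
    supportFn C u ≤ supportFn C v + R * ‖u - v‖ := by
  refine supportFn_le hne fun x hx => ?_
  have h1 : (inner ℝ u x : ℝ) = inner ℝ v x + (inner ℝ (u - v) x : ℝ) := by
    rw [inner_sub_left]; ring
  have h2 : (inner ℝ (u - v) x : ℝ) ≤ ‖u - v‖ * ‖x‖ := real_inner_le_norm _ _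
  have h3 : ‖u - v‖ * ‖x‖ ≤ R * ‖u - v‖ := by
    rw [mul_comm]
    exact mul_le_mul_of_nonneg_right (hR x hx) (norm_nonneg _)
  have h4 : (inner ℝ v x : ℝ) ≤ supportFn C v := inner_le_supportFn hC hx
  linarith

private lemma continuous_supportFn {C : Set (EuclideanSpace ℝ (Fin n))} (hC : IsCompact C)
    (hne : C.Nonempty) : Continuous (supportFn C) := by
  obtain ⟨R0, hR0⟩ := hC.isBounded.exists_norm_le
  have hR : ∀ x ∈ C, ‖x‖ ≤ max R0 0 := fun x hx => le_trans (hR0 x hx) (le_max_left _ _)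
  have hR0' : (0:ℝ) ≤ max R0 0 := le_max_right _ _
  refine (LipschitzWith.of_dist_le_mul (K := ⟨max R0 0, hR0'⟩) fun u v => ?_).continuous
  rw [Real.dist_eq, dist_eq_norm]
  have key : |supportFn C u - supportFn C v| ≤ max R0 0 * ‖u - v‖ := by
    rw [abs_sub_le_iff]
    refine ⟨by linarith [supportFn_sub_le hC hne hR u v], ?_⟩
    have h := supportFn_sub_le hC hne hR v u
    rw [norm_sub_rev] at h
    linarith
  exact key

private lemma isClosed_polarSet {C : Set (EuclideanSpace ℝ (Fin n))} :
    IsClosed (polarSet C) := by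
  have h : polarSet C = ⋂ x ∈ C, {a : EuclideanSpace ℝ (Fin n) | (inner ℝ a x : ℝ) ≤ 1} := by
    ext a; simp [polarSet]
  rw [h]
  exact isClosed_biInter fun x _ =>
    isClosed_le (continuous_id.inner continuous_const) continuous_const

private lemma frontier_polar_exists {C : Set (EuclideanSpace ℝ (Fin n))} (hCcomp : IsCompact C)
    (h0 : 0 ∈ interior C) {b : EuclideanSpace ℝ (Fin n)}
    (hb : b ∈ frontier (polarSet C)) : ∃ x ∈ C, (inner ℝ b x : ℝ) = 1 := by
  have hne : C.Nonempty := ⟨0, interior_subset h0⟩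
  obtain ⟨R0, hR0⟩ := hCcomp.isBounded.exists_norm_le
  have hR : ∀ x ∈ C, ‖x‖ ≤ max R0 1 := fun x hx => le_trans (hR0 x hx) (le_max_left _ _)
  have hRpos : (0:ℝ) < max R0 1 := lt_of_lt_of_le one_pos (le_max_right _ _)
  have hbP : b ∈ polarSet C := isClosed_polarSet.frontier_subset hb
  have hble : supportFn C b ≤ 1 := supportFn_le hne hbP
  have heq : supportFn C b = 1 := by
    by_contra hne1
    have hlt : supportFn C b < 1 := lt_of_le_of_ne hble hne1
    have hint : b ∈ interior (polarSet C) := by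
      rw [mem_interior_iff_mem_nhds, Metric.mem_nhds_iff]
      refine ⟨(1 - supportFn C b) / max R0 1, div_pos (by linarith) hRpos, fun b' hb' => ?_⟩
      intro x hx
      have h1 : (inner ℝ b' x : ℝ) ≤ supportFn C b' := inner_le_supportFn hCcomp hx
      have h2 := supportFn_sub_le hCcomp hne hR b' b
      have h3 : ‖b' - b‖ < (1 - supportFn C b) / max R0 1 := by
        rwa [Metric.mem_ball, dist_eq_norm] at hb'
      have h4 : max R0 1 * ‖b' - b‖ < 1 - supportFn C b := by
        rw [mul_comm]
        exact (lt_div_iff₀ hRpos).mp h3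
      linarith
    exact hb.2 hint
  obtain ⟨x, hx, hxe⟩ := exists_supportFn_eq hCcomp hne b
  exact ⟨x, hx, by rw [hxe, heq]⟩

private lemma symMAX_inner_bound {C : Set (EuclideanSpace ℝ (Fin n))}
    {b : EuclideanSpace ℝ (Fin n)} {r : ℝ}
    (h1 : ∀ x ∈ C, (inner ℝ b x : ℝ) ≤ r) (h2 : ∀ x ∈ C, -r ≤ (inner ℝ b x : ℝ)) :
    ∀ z ∈ symMAX C, (inner ℝ b z : ℝ) ≤ r ∧ -r ≤ (inner ℝ b z : ℝ) := by
  have hlin : IsLinearMap ℝ (fun z : EuclideanSpace ℝ (Fin n) => (inner ℝ b z : ℝ)) :=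
    ⟨fun x y => inner_add_right _ _ _, fun c x => real_inner_smul_right _ _ _⟩
  intro z hz
  have hsub : symMAX C ⊆ {z : EuclideanSpace ℝ (Fin n) | (inner ℝ b z : ℝ) ≤ r} ∩
      {z : EuclideanSpace ℝ (Fin n) | -r ≤ (inner ℝ b z : ℝ)} := by
    refine convexHull_min ?_ ((convex_halfSpace_le hlin r).inter (convex_halfSpace_ge hlin (-r)))
    rintro x (hx | hx)
    · exact ⟨h1 x hx, h2 x hx⟩
    · have hx' : -x ∈ C := mem_neg.mp hx
      have hb1 := h1 _ hx'
      have hb2 := h2 _ hx'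
      rw [inner_neg_right] at hb1 hb2
      exact ⟨show (inner ℝ b x : ℝ) ≤ r by linarith,
        show -r ≤ (inner ℝ b x : ℝ) by linarith⟩
  exact ⟨(hsub hz).1, (hsub hz).2⟩

end AuxProofs
section AuxProofs2

private lemma oneD_symm {C : Set (EuclideanSpace ℝ (Fin 1))} (hCconv : Convex ℝ C)
    (hCcomp : IsCompact C) (h0 : 0 ∈ interior C) (hMC : MinkowskiCentered C) : C = -C := by
  classical
  set e : EuclideanSpace ℝ (Fin 1) := EuclideanSpace.single 0 1 with he
  have hee : (inner ℝ e e : ℝ) = 1 := by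
    rw [real_inner_self_eq_norm_sq, he, EuclideanSpace.norm_single]; norm_num
  have key : ∀ x : EuclideanSpace ℝ (Fin 1), ((inner ℝ e x : ℝ)) • e = x := by
    intro x
    have h1 : (inner ℝ e x : ℝ) = x 0 := by
      rw [he, EuclideanSpace.inner_single_left]; simp
    refine PiLp.ext fun i => ?_
    have hi : i = 0 := Subsingleton.elim _ _
    subst hi
    simp [h1, he, EuclideanSpace.single_apply, PiLp.smul_apply, EuclideanSpace.inner_single_left]
  let F : EuclideanSpace ℝ (Fin 1) →ₗ[ℝ] ℝ :=
    { toFun := fun x => (inner ℝ e x : ℝ)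
      map_add' := fun x y => inner_add_right _ _ _
      map_smul' := fun c x => by simp [real_inner_smul_right] }
  have hne : C.Nonempty := ⟨0, interior_subset h0⟩
  have hAcomp : IsCompact (F '' C) := hCcomp.image (continuous_const.inner continuous_id)
  have hAconv : Convex ℝ (F '' C) := hCconv.linear_image F
  have hAne : (F '' C).Nonempty := hne.image _
  have hIcc : F '' C = Set.Icc (sInf (F '' C)) (sSup (F '' C)) :=
    eq_Icc_of_connected_compact ⟨hAne, hAconv.isPreconnected⟩ hAcomp
  set a := sInf (F '' C)
  set b := sSup (F '' C)
  set t : EuclideanSpace ℝ (Fin 1) := (a + b) • e with ht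
  have hFt : F t = a + b := by
    show (inner ℝ e ((a+b) • e) : ℝ) = a + b
    rw [real_inner_smul_right, hee]; ring
  have h1mem : (1:ℝ) ∈ {ρ : ℝ | 0 ≤ ρ ∧ ∃ t' : EuclideanSpace ℝ (Fin 1),
      C ⊆ t' +ᵥ ρ • (-C)} := by
    refine ⟨zero_le_one, t, fun x hx => ?_⟩
    rw [mem_vadd_set_iff_neg_vadd_mem, one_smul, Set.mem_neg]
    have hx' : F x ∈ Set.Icc a b := by rw [← hIcc]; exact Set.mem_image_of_mem _ hx
    have hmem : F (t - x) ∈ Set.Icc a b := by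
      rw [map_sub, hFt]
      exact ⟨by linarith [hx'.2], by linarith [hx'.1]⟩
    rw [← hIcc] at hmem
    obtain ⟨c, hc, hce⟩ := hmem
    have : t - x = c := by
      have h1 := key (t - x)
      have h2 := key c
      rw [show (inner ℝ e (t - x) : ℝ) = F (t - x) from rfl, ← hce] at h1
      rw [show (inner ℝ e c : ℝ) = F c from rfl] at h2
      rw [← h1]; exact h2
    have : -(-t +ᵥ x) = c := by rw [vadd_eq_add, ← this]; abel
    rw [this]; exact hc
  have hS : BddBelow {ρ : ℝ | 0 ≤ ρ ∧ ∃ t' : EuclideanSpace ℝ (Fin 1), C ⊆ t' +ᵥ ρ • (-C)} :=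
    ⟨0, fun ρ hρ => hρ.1⟩
  have hsle : minkAsym C ≤ 1 := csInf_le hS h1mem
  have hs0 : 0 ≤ minkAsym C := le_csInf ⟨1, h1mem⟩ fun ρ hρ => hρ.1
  have h0C : (0 : EuclideanSpace ℝ (Fin 1)) ∈ -C := by
    rw [Set.mem_neg, neg_zero]; exact interior_subset h0
  have hsmul : minkAsym C • (-C) ⊆ -C := by
    intro z hz
    obtain ⟨w, hw, rfl⟩ := mem_smul_set.mp hz
    have := hCconv.neg hw h0C hs0 (by linarith : (0:ℝ) ≤ 1 - minkAsym C) (by ring)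
    simpa using this
  have hsub2 : C ⊆ -C := hMC.1.trans hsmul
  refine Set.Subset.antisymm hsub2 fun x hx => ?_
  have : -x ∈ C := Set.mem_neg.mp hx
  have := hsub2 this
  rw [Set.mem_neg, neg_neg] at this
  exact this

end AuxProofs2
section AuxProofs3

private lemma exists_dir {n : ℕ} (hn : 0 < n) {C : Set (EuclideanSpace ℝ (Fin n))}
    (hCconv : Convex ℝ C) (hCcomp : IsCompact C) (h0 : 0 ∈ interior C)
    (hMC : MinkowskiCentered C) :
    ∃ u : EuclideanSpace ℝ (Fin n), ‖u‖ = 1 ∧ supportFn C u = supportFn C (-u) := by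
  classical
  have hne : C.Nonempty := ⟨0, interior_subset h0⟩
  rcases lt_or_ge n 2 with h2 | h2
  · have h1 : n = 1 := by omega
    subst h1
    have hsym := oneD_symm hCconv hCcomp h0 hMC
    refine ⟨EuclideanSpace.single 0 1, by rw [EuclideanSpace.norm_single]; norm_num, ?_⟩
    show sSup _ = sSup _
    congr 1
    ext y
    constructor
    · rintro ⟨x, hx, rfl⟩
      have hx' : -x ∈ C := by rw [hsym]; exact neg_mem_neg.mpr hx
      exact ⟨-x, hx', by simp⟩
    · rintro ⟨x, hx, rfl⟩
      have hx' : -x ∈ C := by rw [hsym]; exact neg_mem_neg.mpr hx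
      exact ⟨-x, hx', by simp⟩
  · have hrank : 1 < Module.rank ℝ (EuclideanSpace ℝ (Fin n)) := by
      rw [← Module.finrank_eq_rank, finrank_euclideanSpace_fin]
      exact_mod_cast (by omega : 1 < n)
    have hconn := isConnected_sphere hrank (0 : EuclideanSpace ℝ (Fin n)) zero_le_one
    set g : EuclideanSpace ℝ (Fin n) → ℝ := fun v => supportFn C v - supportFn C (-v) with hg
    have hcont : Continuous g :=
      (continuous_supportFn hCcomp hne).sub
        ((continuous_supportFn hCcomp hne).comp continuous_neg)
    set u0 : EuclideanSpace ℝ (Fin n) := EuclideanSpace.single ⟨0, hn⟩ 1 with hu0def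
    have hu0 : u0 ∈ Metric.sphere (0 : EuclideanSpace ℝ (Fin n)) 1 := by
      rw [mem_sphere_zero_iff_norm, hu0def, EuclideanSpace.norm_single]; norm_num
    have hu0' : -u0 ∈ Metric.sphere (0 : EuclideanSpace ℝ (Fin n)) 1 := by
      rwa [mem_sphere_zero_iff_norm, norm_neg, ← mem_sphere_zero_iff_norm]
    have hgneg : g (-u0) = -g u0 := by
      show supportFn C (-u0) - supportFn C (-(-u0)) = -(supportFn C u0 - supportFn C (-u0))
      rw [neg_neg]; ring
    have h0mem : (0:ℝ) ∈ g '' Metric.sphere (0 : EuclideanSpace ℝ (Fin n)) 1 := by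
      rcases le_total (g u0) 0 with h | h
      · exact hconn.isPreconnected.intermediate_value hu0 hu0' hcont.continuousOn
          ⟨h, by rw [hgneg]; linarith⟩
      · exact hconn.isPreconnected.intermediate_value hu0' hu0 hcont.continuousOn
          ⟨by rw [hgneg]; linarith, h⟩
    obtain ⟨u, huS, hgu⟩ := h0mem
    refine ⟨u, mem_sphere_zero_iff_norm.mp huS, ?_⟩
    have : supportFn C u - supportFn C (-u) = 0 := hgu
    linarith

private lemma circ_one {n : ℕ} (hn : 0 < n) {C : Set (EuclideanSpace ℝ (Fin n))}
    (hCconv : Convex ℝ C) (hCcomp : IsCompact C) (h0 : 0 ∈ interior C)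
    (hMC : MinkowskiCentered C) : circumradius (symAM C) (symMAX C) = 1 := by
  have hne : C.Nonempty := ⟨0, interior_subset h0⟩
  have hMconv : Convex ℝ (symMAX C) := convex_convexHull ℝ _
  have hCM : C ⊆ symMAX C := (Set.subset_union_left).trans (subset_convexHull ℝ _)
  have hCM' : -C ⊆ symMAX C := (Set.subset_union_right).trans (subset_convexHull ℝ _)
  have hmem1 : (1:ℝ) ∈ {ρ : ℝ | 0 ≤ ρ ∧ ∃ t : EuclideanSpace ℝ (Fin n),
      symAM C ⊆ t +ᵥ ρ • symMAX C} := by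
    refine ⟨zero_le_one, 0, fun z hz => ?_⟩
    rw [mem_vadd_set_iff_neg_vadd_mem, one_smul, neg_zero, zero_vadd]
    obtain ⟨w, hw, rfl⟩ := mem_smul_set.mp hz
    obtain ⟨x, hx, y, hy, rfl⟩ := mem_sub.mp hw
    have h1 : x ∈ symMAX C := hCM hx
    have h2 : -y ∈ symMAX C := hCM' (neg_mem_neg.mpr hy)
    have h3 := hMconv h1 h2 (by norm_num : (0:ℝ) ≤ 2⁻¹) (by norm_num : (0:ℝ) ≤ 2⁻¹)
      (by norm_num : (2:ℝ)⁻¹ + 2⁻¹ = 1)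
    have heq : (2:ℝ)⁻¹ • (x - y) = (2:ℝ)⁻¹ • x + (2:ℝ)⁻¹ • (-y) := by module
    rw [heq]; exact h3
  have hlow : ∀ ρ ∈ {ρ : ℝ | 0 ≤ ρ ∧ ∃ t : EuclideanSpace ℝ (Fin n),
      symAM C ⊆ t +ᵥ ρ • symMAX C}, 1 ≤ ρ := by
    rintro ρ ⟨hρ0, t, hsub⟩
    obtain ⟨u, hu1, huf⟩ := exists_dir hn hCconv hCcomp h0 hMC
    set m := supportFn C u with hm
    have hmpos : 0 < m := by
      obtain ⟨ε, hε, hball⟩ := Metric.mem_nhds_iff.mp (mem_interior_iff_mem_nhds.mp h0)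
      have hxC : (ε/2) • u ∈ C := by
        apply hball
        rw [Metric.mem_ball, dist_zero_right, norm_smul, hu1]
        rw [Real.norm_eq_abs, abs_of_pos (by linarith)]
        linarith
      have hle := inner_le_supportFn hCcomp hxC (u := u)
      have hval : (inner ℝ u ((ε/2) • u) : ℝ) = ε/2 := by
        rw [real_inner_smul_right, real_inner_self_eq_norm_sq, hu1]; ring
      rw [hval] at hle
      linarith
    obtain ⟨p, hp, hpe⟩ := exists_supportFn_eq hCcomp hne u
    obtain ⟨q, hq, hqe⟩ := exists_supportFn_eq hCcomp hne (-u)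
    have hup : (inner ℝ u p : ℝ) = m := hpe
    have huq : (inner ℝ u q : ℝ) = -m := by
      have := hqe
      rw [inner_neg_left, ← huf] at this
      linarith
    have hb1 : ∀ x ∈ C, (inner ℝ u x : ℝ) ≤ m := fun x hx => inner_le_supportFn hCcomp hx
    have hb2 : ∀ x ∈ C, -m ≤ (inner ℝ u x : ℝ) := by
      intro x hx
      have h := inner_le_supportFn hCcomp hx (u := -u)
      rw [inner_neg_left, ← huf] at h
      linarith
    have hM := symMAX_inner_bound hb1 hb2
    have hzmem : (2:ℝ)⁻¹ • (p - q) ∈ symAM C :=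
      smul_mem_smul_set (sub_mem_sub hp hq)
    have hzmem' : (2:ℝ)⁻¹ • (q - p) ∈ symAM C :=
      smul_mem_smul_set (sub_mem_sub hq hp)
    obtain ⟨w, hw, hwe⟩ := mem_smul_set.mp (mem_vadd_set_iff_neg_vadd_mem.mp (hsub hzmem))
    obtain ⟨w', hw', hwe'⟩ := mem_smul_set.mp (mem_vadd_set_iff_neg_vadd_mem.mp (hsub hzmem'))
    have keyw : ρ * (inner ℝ u w : ℝ) = -(inner ℝ u t : ℝ) + m := by
      have hc := congrArg (fun z => (inner ℝ u z : ℝ)) hwe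
      simp only [real_inner_smul_right, vadd_eq_add, inner_add_right, inner_neg_right,
        inner_sub_right] at hc
      rw [hup, huq] at hc
      linarith
    have keyw' : ρ * (inner ℝ u w' : ℝ) = -(inner ℝ u t : ℝ) - m := by
      have hc := congrArg (fun z => (inner ℝ u z : ℝ)) hwe'
      simp only [real_inner_smul_right, vadd_eq_add, inner_add_right, inner_neg_right,
        inner_sub_right] at hc
      rw [hup, huq] at hc
      linarith
    have hub := (hM w hw).1
    have hlb := (hM w' hw').2
    have h5 : ρ * (inner ℝ u w : ℝ) ≤ ρ * m := mul_le_mul_of_nonneg_left hub hρ0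
    have h6 : ρ * (-m) ≤ ρ * (inner ℝ u w' : ℝ) := mul_le_mul_of_nonneg_left hlb hρ0
    nlinarith
  show sInf _ = 1
  exact le_antisymm (csInf_le ⟨0, fun ρ hρ => hρ.1⟩ hmem1) (le_csInf ⟨1, hmem1⟩ hlow)

end AuxProofs3
/-- For a Minkowski-centered gauge `C`: `C_MAX ⊆ C^sup ⊆ C^out`, where `C^sup` is the
supercompletion `⋂_{x ∈ C} (x + D_MAX(C,C) • C_MAX)` and `C^out` is the outer symmetric
support `⋂_{a ∈ bd(C°) ∩ bd(-C°)} {y : ⟪a,y⟫ ≤ 1}`. -/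
theorem CMAX_subset_sup_subset_out {n : ℕ} (C : Set (EuclideanSpace ℝ (Fin n)))
    (hCconv : Convex ℝ C) (hCcomp : IsCompact C) (h0 : 0 ∈ interior C)
    (hMC : MinkowskiCentered C) :
    symMAX C ⊆ ⋂ x ∈ C, (x +ᵥ DMAX C C • symMAX C) ∧
      (⋂ x ∈ C, (x +ᵥ DMAX C C • symMAX C)) ⊆
        {y : EuclideanSpace ℝ (Fin n) |
          ∀ a ∈ frontier (polarSet C) ∩ frontier (-(polarSet C)), (inner ℝ a y : ℝ) ≤ 1} := by
  rcases Nat.eq_zero_or_pos n with hn | hn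
  · subst hn
    haveI hsub : Subsingleton (EuclideanSpace ℝ (Fin 0)) :=
      ⟨fun a b => PiLp.ext fun i => Fin.elim0 i⟩
    constructor
    · intro y _
      rw [Set.mem_iInter₂]
      intro x hx
      rw [mem_vadd_set_iff_neg_vadd_mem]
      have h0C : (0 : EuclideanSpace ℝ (Fin 0)) ∈ symMAX C :=
        (subset_convexHull ℝ _) (Set.mem_union_left _ (interior_subset h0))
      have heq : -x +ᵥ y = DMAX C C • (0 : EuclideanSpace ℝ (Fin 0)) := Subsingleton.elim _ _
      rw [heq]
      exact smul_mem_smul_set h0C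
    · intro y _
      simp only [Set.mem_setOf_eq]
      intro a _
      have ha0 : a = 0 := Subsingleton.elim _ _
      rw [ha0, inner_zero_left]
      exact zero_le_one
  · have hD : DMAX C C = 2 := by
      rw [DMAX, circ_one hn hCconv hCcomp h0 hMC]; norm_num
    have hMconv : Convex ℝ (symMAX C) := convex_convexHull ℝ _
    constructor
    · intro y hy
      rw [Set.mem_iInter₂]
      intro x hx
      rw [hD, mem_vadd_set_iff_neg_vadd_mem]
      refine mem_smul_set.mpr ⟨(2:ℝ)⁻¹ • (-x + y), ?_, ?_⟩
      · have h1 : -x ∈ symMAX C :=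
          (subset_convexHull ℝ _) (Set.mem_union_right _ (neg_mem_neg.mpr hx))
        have h3 := hMconv h1 hy (by norm_num : (0:ℝ) ≤ 2⁻¹) (by norm_num : (0:ℝ) ≤ 2⁻¹)
          (by norm_num : (2:ℝ)⁻¹ + 2⁻¹ = 1)
        have heq : (2:ℝ)⁻¹ • (-x + y) = (2:ℝ)⁻¹ • (-x) + (2:ℝ)⁻¹ • y := by module
        rw [heq]; exact h3
      · rw [vadd_eq_add]; module
    · intro y hy
      simp only [Set.mem_setOf_eq]
      intro a ha
      have ha1 : a ∈ frontier (polarSet C) := ha.1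
      have ha2 : a ∈ frontier (-(polarSet C)) := ha.2
      have haP : a ∈ polarSet C := isClosed_polarSet.frontier_subset ha1
      have hnegfront : -a ∈ frontier (polarSet C) := by
        have hset : -(polarSet C) =
            (Homeomorph.neg (EuclideanSpace ℝ (Fin n))) ⁻¹' (polarSet C) := by
          ext z; simp [Set.mem_neg]
        rw [hset, ← Homeomorph.preimage_frontier] at ha2
        simpa using ha2
      have hnegP : -a ∈ polarSet C := isClosed_polarSet.frontier_subset hnegfront
      obtain ⟨x₀, hx₀, hx₀e⟩ := frontier_polar_exists hCcomp h0 hnegfront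
      have hax₀ : (inner ℝ a x₀ : ℝ) = -1 := by
        rw [inner_neg_left] at hx₀e; linarith
      have hyy := Set.mem_iInter₂.mp hy x₀ hx₀
      rw [hD, mem_vadd_set_iff_neg_vadd_mem] at hyy
      obtain ⟨w, hw, hwe⟩ := mem_smul_set.mp hyy
      have hb1 : ∀ x ∈ C, (inner ℝ a x : ℝ) ≤ 1 := fun x hx => haP x hx
      have hb2 : ∀ x ∈ C, (-1:ℝ) ≤ (inner ℝ a x : ℝ) := fun x hx => by
        have h := hnegP x hx
        rw [inner_neg_left] at h
        linarith
      have hwb := (symMAX_inner_bound hb1 hb2 w hw).1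
      have hc := congrArg (fun z => (inner ℝ a z : ℝ)) hwe
      simp only [real_inner_smul_right, vadd_eq_add, inner_add_right, inner_neg_right] at hc
      rw [hax₀] at hc
      linarith
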